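/- Fixpoint characterization of least program models: let ⟨ℛ, Q, C⟩ be an admissible triple and P a SQCLP(ℛ,Q,C)-program. Then P has a least model M_P, i.e., a model of P contained (w.r.t. set inclusion) in every model of P, and M_P can be characterized as the least fixpoint of the interpretation transformer T_P; moreover M_P = lfp(T_P) = ⋃_{k ∈ ℕ} T_P^k(∅), where T_P^k denotes the k-fold iteration of T_P starting from the empty qc-interpretation. -/

import Mathlib

open scoped BigOperators

/-- A qualification domain: a bounded lattice equipped with an attenuation operation. -/
structure QualificationDomain (D : Type*) [Lattice D] [BoundedOrder D] where
  att : D → D → D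
  att_assoc : ∀ d e f : D, att (att d e) f = att d (att e f)
  att_comm : ∀ d e : D, att d e = att e d
  att_mono : ∀ d d' e e' : D, d ≤ d' → e ≤ e' → att d e ≤ att d' e'
  att_top : ∀ d : D, att d ⊤ = d
  att_bot : ∀ d : D, att d ⊥ = ⊥
  att_le : ∀ d e : D, att d e ≤ e
  att_ne_bot : ∀ d e : D, d ≠ ⊥ → e ≠ ⊥ → att d e ≠ ⊥
  att_inf : ∀ d e₁ e₂ : D, att d (e₁ ⊓ e₂) = att d e₁ ⊓ att d e₂

/-- First-order terms over variables `V` and data constructors `CS`. -/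
inductive Trm (V : Type*) (CS : Type*) : Type _
  | var : V → Trm V CS
  | app : CS → List (Trm V CS) → Trm V CS

variable {V CS DP PP : Type*}

/-- Application of a substitution to a term. -/
def Trm.subst (θ : V → Trm V CS) : Trm V CS → Trm V CS
  | .var X => θ X
  | .app c ts => .app c (ts.attach.map fun t => t.1.subst θ)
decreasing_by
  have := List.sizeOf_lt_of_mem t.2
  simp only [Trm.app.sizeOf_spec]
  omega

/-- Application of a valuation (ground substitution) to a term; ground terms are
terms over the empty set of variables. -/
def Trm.applyVal (η : V → Trm Empty CS) : Trm V CS → Trm Empty CS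
  | .var X => η X
  | .app c ts => .app c (ts.attach.map fun t => t.1.applyVal η)
decreasing_by
  have := List.sizeOf_lt_of_mem t.2
  simp only [Trm.app.sizeOf_spec]
  omega

variable {D : Type*} [Lattice D] [BoundedOrder D]

/-- The extension of a proximity relation on symbols to a proximity relation on terms:
`ext R (var X) (var X) = ⊤`, `ext R t s = ⊥` if exactly one of `t`, `s` is a variable or
they are applications of different arities, and
`ext R (c(t₁,…,tₙ)) (c'(s₁,…,sₙ)) = R c c' ⊓ ext R t₁ s₁ ⊓ ⋯ ⊓ ext R tₙ sₙ`. -/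
def Trm.ext [DecidableEq V] (R : CS → CS → D) : Trm V CS → Trm V CS → D
  | .var X, .var Y => if X = Y then (⊤ : D) else ⊥
  | .var _, .app _ _ => ⊥
  | .app _ _, .var _ => ⊥
  | .app c ts, .app c' ss =>
      if ts.length = ss.length then
        R c c' ⊓ ((ts.zip ss).attach.map (fun p => Trm.ext R p.1.1 p.1.2)).foldr (· ⊓ ·) ⊤
      else ⊥
termination_by t _ => sizeOf t
decreasing_by
  have h1 : p.1.1 ∈ ts := (List.of_mem_zip p.2).1
  have := List.sizeOf_lt_of_mem h1
  simp only [Trm.app.sizeOf_spec]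
  omega

/-- Constraints over terms: primitive atoms, equations, conjunction and
existential quantification. -/
inductive Constr (V CS PP : Type*) : Type _
  | prim : PP → List (Trm V CS) → Constr V CS PP
  | eq : Trm V CS → Trm V CS → Constr V CS PP
  | and : Constr V CS PP → Constr V CS PP → Constr V CS PP
  | ex : V → Constr V CS PP → Constr V CS PP

/-- Satisfaction of a constraint by a valuation, relative to an interpretation `pI` of the
primitive predicates over ground terms.  An equation is true iff both sides evaluate to the
same ground term. -/
def Constr.sat [DecidableEq V] (pI : PP → List (Trm Empty CS) → Prop)
    (η : V → Trm Empty CS) : Constr V CS PP → Prop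
  | .prim p ts => pI p (ts.map (Trm.applyVal η))
  | .eq t s => t.applyVal η = s.applyVal η
  | .and c₁ c₂ => c₁.sat pI η ∧ c₂.sat pI η
  | .ex X c => ∃ u : Trm Empty CS, c.sat pI (Function.update η X u)

/-- The set of solutions of a set of constraints. -/
def Sol [DecidableEq V] (pI : PP → List (Trm Empty CS) → Prop)
    (Pi : Set (Constr V CS PP)) : Set (V → Trm Empty CS) :=
  {η | ∀ c ∈ Pi, c.sat pI η}

/-- Entailment `Π ⊨_C π` of a constraint by a set of constraints. -/
def Entails [DecidableEq V] (pI : PP → List (Trm Empty CS) → Prop)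
    (Pi : Set (Constr V CS PP)) (c : Constr V CS PP) : Prop :=
  ∀ η ∈ Sol pI Pi, c.sat pI η

/-- Semantic form of the entailment `Π' ⊨_C Πθ`: every solution of `Π'`, composed with the
substitution `θ`, is a solution of `Π`. -/
def EntailsSubst [DecidableEq V] (pI : PP → List (Trm Empty CS) → Prop)
    (Pi' : Set (Constr V CS PP)) (θ : V → Trm V CS) (Pi : Set (Constr V CS PP)) : Prop :=
  ∀ η ∈ Sol pI Pi', (fun X => (θ X).applyVal η) ∈ Sol pI Pi

/-- Constraint-based term proximity: `t ≈_{d,Π} s` iff there are terms `t̂`, `ŝ` with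
`Π ⊨_C t == t̂`, `Π ⊨_C s == ŝ` and `ext R t̂ ŝ ⊒ d`. -/
def TermClose [DecidableEq V] (R : CS → CS → D) (pI : PP → List (Trm Empty CS) → Prop)
    (d : D) (Pi : Set (Constr V CS PP)) (t s : Trm V CS) : Prop :=
  ∃ th sh : Trm V CS,
    Entails pI Pi (Constr.eq t th) ∧ Entails pI Pi (Constr.eq s sh) ∧ d ≤ Trm.ext R th sh

/-- Atoms: defined atoms, primitive atoms and equations. -/
inductive Atom (V CS DP PP : Type*) : Type _
  | defd : DP → List (Trm V CS) → Atom V CS DP PP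
  | prim : PP → List (Trm V CS) → Atom V CS DP PP
  | eq : Trm V CS → Trm V CS → Atom V CS DP PP

/-- Application of a substitution to an atom. -/
def Atom.subst (θ : V → Trm V CS) : Atom V CS DP PP → Atom V CS DP PP
  | .defd r ts => .defd r (ts.map (Trm.subst θ))
  | .prim p ts => .prim p (ts.map (Trm.subst θ))
  | .eq t s => .eq (t.subst θ) (s.subst θ)

/-- A defined atom. -/
def Atom.IsDefined : Atom V CS DP PP → Prop
  | .defd _ _ => True
  | .prim _ _ => False
  | .eq _ _ => False

/-- A qualified constrained atom (qc-atom) `A#d ⇐ Π`. -/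
structure QCAtom (V CS DP PP D : Type*) where
  atom : Atom V CS DP PP
  deg : D
  cons : Set (Constr V CS PP)

/-- A qc-atom is observable iff its qualification value is not `⊥` and its constraint
set is satisfiable. -/
def Observable [DecidableEq V] (pI : PP → List (Trm Empty CS) → Prop)
    (φ : QCAtom V CS DP PP D) : Prop :=
  φ.deg ≠ ⊥ ∧ (Sol pI φ.cons).Nonempty

/-- The entailment relation `φ ⊨_{Q,C} φ'` between qc-atoms: there is a substitution `θ`
with `A' = Aθ`, `d' ⊑ d` and `Π' ⊨_C Πθ`. -/
def QCEntails [DecidableEq V] (pI : PP → List (Trm Empty CS) → Prop)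
    (φ φ' : QCAtom V CS DP PP D) : Prop :=
  ∃ θ : V → Trm V CS,
    φ'.atom = φ.atom.subst θ ∧ φ'.deg ≤ φ.deg ∧ EntailsSubst pI φ'.cons θ φ.cons

/-- A qc-interpretation: a set of defined observable qc-atoms closed under `⊨_{Q,C}`. -/
def IsInterp [DecidableEq V] (pI : PP → List (Trm Empty CS) → Prop)
    (I : Set (QCAtom V CS DP PP D)) : Prop :=
  (∀ φ ∈ I, φ.atom.IsDefined ∧ Observable pI φ) ∧
  (∀ φ ∈ I, ∀ φ' : QCAtom V CS DP PP D,
    QCEntails pI φ φ' → Observable pI φ' → φ' ∈ I)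

/-- Validity of an observable qc-atom in a qc-interpretation. -/
def Valid [DecidableEq V] (R : CS → CS → D) (pI : PP → List (Trm Empty CS) → Prop)
    (I : Set (QCAtom V CS DP PP D)) (φ : QCAtom V CS DP PP D) : Prop :=
  match φ.atom with
  | .defd _ _ => φ ∈ I
  | .prim p ts => Entails pI φ.cons (Constr.prim p ts)
  | .eq t s => TermClose R pI φ.deg φ.cons t s

/-- A `Q`-valued proximity relation on the symbols (variables, data constructors, defined
predicates, primitive predicates): it is determined by its restrictions to data constructors
and to defined predicate symbols, since it behaves as the identity on variables and is `⊥`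
between symbols of different kinds (and on primitive predicates it is only nonbottom between
equal symbols). -/
structure ProximityRel (D : Type*) [Lattice D] [BoundedOrder D] {CS DP : Type*}
    (arC : CS → ℕ) (arD : DP → ℕ) where
  dc : CS → CS → D
  dp : DP → DP → D
  dc_refl : ∀ c, dc c c = ⊤
  dc_symm : ∀ c c', dc c c' = dc c' c
  dc_arity : ∀ c c', dc c c' ≠ ⊥ → arC c = arC c'
  dp_refl : ∀ r, dp r r = ⊤
  dp_symm : ∀ r r', dp r r' = dp r' r
  dp_arity : ∀ r r', dp r r' ≠ ⊥ → arD r = arD r'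

/-- A program clause `p(t₁,…,tₙ) ←α– B₁#w₁, …, Bₘ#wₘ`; a threshold `wⱼ` is either `some w`
with `w ∈ D` or `none` (standing for `?`). -/
structure Clause (V CS DP PP D : Type*) where
  headPred : DP
  headArgs : List (Trm V CS)
  att : D
  body : List (Atom V CS DP PP × Option D)

/-- Well-formedness of a clause: the attenuation factor and all thresholds are `≠ ⊥`. -/
def ClauseWF (C : Clause V CS DP PP D) : Prop :=
  C.att ≠ ⊥ ∧ ∀ bw ∈ C.body, ∀ w, bw.2 = some w → w ≠ (⊥ : D)

/-- A SQCLP program: a set of well-formed clauses. -/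
def ProgWF (P : Set (Clause V CS DP PP D)) : Prop := ∀ C ∈ P, ClauseWF C

/-- `e ⊒? w`: trivially true for `w = ?`, and `w ⊑ e` otherwise. -/
def MeetsThreshold (e : D) : Option D → Prop
  | none => True
  | some w => w ≤ e

/-- The observable defined qc-atom `φ : p'(t'₁,…,t'ₙ)#d ⇐ Π` is an immediate consequence of
the qc-interpretation `I` via the clause `C`. -/
def ImmCons [DecidableEq V] (Q : QualificationDomain D) {arC : CS → ℕ} {arD : DP → ℕ}
    (Rl : ProximityRel D arC arD) (pI : PP → List (Trm Empty CS) → Prop)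
    (I : Set (QCAtom V CS DP PP D)) (C : Clause V CS DP PP D)
    (φ : QCAtom V CS DP PP D) : Prop :=
  ∃ (p' : DP) (ts' : List (Trm V CS)),
    φ.atom = Atom.defd p' ts' ∧ Observable pI φ ∧
    ∃ (θ : V → Trm V CS) (hn : C.headArgs.length = ts'.length)
      (ds : Fin ts'.length → D) (es : Fin C.body.length → D),
      Rl.dp p' C.headPred ≠ ⊥ ∧
      (∀ i, ds i ≠ ⊥) ∧ (∀ j, es j ≠ ⊥) ∧
      (∀ i : Fin ts'.length,
        TermClose Rl.dc pI (ds i) φ.cons (ts'.get i)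
          ((C.headArgs.get (Fin.cast hn.symm i)).subst θ)) ∧
      (∀ j : Fin C.body.length,
        Valid Rl.dc pI I ⟨((C.body.get j).1.subst θ), es j, φ.cons⟩) ∧
      (∀ j : Fin C.body.length, MeetsThreshold (es j) (C.body.get j).2) ∧
      φ.deg ≤ (Rl.dp p' C.headPred ⊓ Finset.univ.inf ds) ⊓ Q.att C.att (Finset.univ.inf es)

/-- The interpretation transformer `T_P`. -/
def Tp [DecidableEq V] (Q : QualificationDomain D) {arC : CS → ℕ} {arD : DP → ℕ}
    (Rl : ProximityRel D arC arD) (pI : PP → List (Trm Empty CS) → Prop)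
    (P : Set (Clause V CS DP PP D)) (I : Set (QCAtom V CS DP PP D)) :
    Set (QCAtom V CS DP PP D) :=
  {φ | ∃ C ∈ P, ImmCons Q Rl pI I C φ}

/-- `I` is a model of the clause `C`. -/
def ModelsClause [DecidableEq V] (Q : QualificationDomain D) {arC : CS → ℕ} {arD : DP → ℕ}
    (Rl : ProximityRel D arC arD) (pI : PP → List (Trm Empty CS) → Prop)
    (I : Set (QCAtom V CS DP PP D)) (C : Clause V CS DP PP D) : Prop :=
  ∀ φ, ImmCons Q Rl pI I C φ → φ ∈ I

/-- `I ⊨_{ℛ,Q,C} P` : `I` is a model of the program `P`. -/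
def ModelsProg [DecidableEq V] (Q : QualificationDomain D) {arC : CS → ℕ} {arD : DP → ℕ}
    (Rl : ProximityRel D arC arD) (pI : PP → List (Trm Empty CS) → Prop)
    (I : Set (QCAtom V CS DP PP D)) (P : Set (Clause V CS DP PP D)) : Prop :=
  ∀ C ∈ P, ModelsClause Q Rl pI I C

/-- Derivability `P ⊢_{ℛ,Q,C} φ` in the Proximity-based Qualified Constrained Horn Logic
SQCHL(ℛ,Q,C), with inference rules SQDA, SQEA and SQPA. -/
inductive Deriv [DecidableEq V] (Q : QualificationDomain D) {arC : CS → ℕ} {arD : DP → ℕ}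
    (Rl : ProximityRel D arC arD) (pI : PP → List (Trm Empty CS) → Prop)
    (P : Set (Clause V CS DP PP D)) : QCAtom V CS DP PP D → Prop
  | sqea : ∀ (d : D) (Pi : Set (Constr V CS PP)) (t s : Trm V CS),
      d ≠ ⊥ → TermClose Rl.dc pI d Pi t s → Deriv Q Rl pI P ⟨Atom.eq t s, d, Pi⟩
  | sqpa : ∀ (d : D) (Pi : Set (Constr V CS PP)) (p : PP) (ts : List (Trm V CS)),
      d ≠ ⊥ → Entails pI Pi (Constr.prim p ts) → Deriv Q Rl pI P ⟨Atom.prim p ts, d, Pi⟩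
  | sqda : ∀ (C : Clause V CS DP PP D), C ∈ P →
      ∀ (θ : V → Trm V CS) (p' : DP) (ts' : List (Trm V CS)) (d : D)
        (Pi : Set (Constr V CS PP)) (hn : C.headArgs.length = ts'.length)
        (ds : Fin ts'.length → D) (es : Fin C.body.length → D),
      Rl.dp p' C.headPred ≠ ⊥ →
      (∀ i, ds i ≠ ⊥) → (∀ j, es j ≠ ⊥) →
      (∀ i : Fin ts'.length,
        Deriv Q Rl pI P
          ⟨Atom.eq (ts'.get i) ((C.headArgs.get (Fin.cast hn.symm i)).subst θ), ds i, Pi⟩) →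
      (∀ j : Fin C.body.length,
        Deriv Q Rl pI P ⟨((C.body.get j).1.subst θ), es j, Pi⟩) →
      (∀ j : Fin C.body.length, MeetsThreshold (es j) (C.body.get j).2) →
      d ≤ (Rl.dp p' C.headPred ⊓ Finset.univ.inf ds) ⊓ Q.att C.att (Finset.univ.inf es) →
      Deriv Q Rl pI P ⟨Atom.defd p' ts', d, Pi⟩

section Theorems

variable {V CS DP PP D : Type*} [DecidableEq V] [Lattice D] [BoundedOrder D]
variable {arC : CS → ℕ} {arD : DP → ℕ}
set_option linter.unusedSectionVars false
namespace SQCLPAux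

lemma attach_map {α β : Type*} (l : List α) (f : α → β) :
    l.attach.map (fun x => f x.1) = l.map f := by
  rw [show (fun x : {x // x ∈ l} => f x.1) = f ∘ Subtype.val from rfl, ← List.map_map,
    List.attach_map_subtype_val]

variable {V CS DP PP : Type*} [DecidableEq V] {D : Type*} [Lattice D] [BoundedOrder D]

lemma subst_app (θ : V → Trm V CS) (c : CS) (ts : List (Trm V CS)) :
    (Trm.app c ts).subst θ = .app c (ts.map (Trm.subst θ)) := by
  rw [Trm.subst, attach_map]

lemma applyVal_app (η : V → Trm Empty CS) (c : CS) (ts : List (Trm V CS)) :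
    (Trm.app c ts).applyVal η = .app c (ts.map (Trm.applyVal η)) := by
  rw [Trm.applyVal, attach_map]

lemma ext_app (R : CS → CS → D) (c c' : CS) (ts ss : List (Trm V CS)) :
    Trm.ext R (.app c ts) (.app c' ss) =
      if ts.length = ss.length then
        R c c' ⊓ ((ts.zip ss).map (fun p => Trm.ext R p.1 p.2)).foldr (· ⊓ ·) ⊤
      else ⊥ := by
  have key : List.map (fun p : {p // p ∈ ts.zip ss} => Trm.ext R p.1.1 p.1.2) (ts.zip ss).attach
      = List.map (fun p => Trm.ext R p.1 p.2) (ts.zip ss) := by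
    conv_rhs => rw [← List.attach_map_subtype_val (ts.zip ss)]
    rw [List.map_map]; rfl
  rw [Trm.ext, key]

lemma zip_self {α : Type*} (l : List α) : l.zip l = l.map (fun a => (a, a)) := by
  induction l with | nil => rfl | cons a l ih => simp [ih]

lemma foldr_inf_top {α : Type*} (l : List α) (f : α → D) (h : ∀ a ∈ l, f a = ⊤) :
    (l.map f).foldr (· ⊓ ·) ⊤ = ⊤ := by
  induction l with
  | nil => rfl
  | cons a l ih =>
    simp only [List.map_cons, List.foldr_cons, h a (by simp),
      ih (fun a ha => h a (by simp [ha])), top_inf_eq]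

lemma foldr_inf_mono {α : Type*} (l : List α) (f g : α → D) (h : ∀ a ∈ l, f a ≤ g a) :
    (l.map f).foldr (· ⊓ ·) ⊤ ≤ (l.map g).foldr (· ⊓ ·) ⊤ := by
  induction l with
  | nil => exact le_rfl
  | cons a l ih => exact inf_le_inf (h a (by simp)) (ih fun a ha => h a (by simp [ha]))

theorem subst_applyVal (θ : V → Trm V CS) (η : V → Trm Empty CS) (t : Trm V CS) :
    (t.subst θ).applyVal η = t.applyVal (fun X => (θ X).applyVal η) := by
  match t with
  | .var X => simp [Trm.subst, Trm.applyVal]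
  | .app c ts =>
    rw [subst_app, applyVal_app, applyVal_app, List.map_map]
    refine congrArg _ (List.map_congr_left fun a ha => ?_)
    have hsz : sizeOf a < sizeOf (Trm.app c ts) := by
      have := List.sizeOf_lt_of_mem ha; simp only [Trm.app.sizeOf_spec]; omega
    exact subst_applyVal θ η a
termination_by sizeOf t

theorem subst_subst (θ θ' : V → Trm V CS) (t : Trm V CS) :
    (t.subst θ).subst θ' = t.subst (fun X => (θ X).subst θ') := by
  match t with
  | .var X => simp [Trm.subst]
  | .app c ts =>
    rw [subst_app, subst_app, subst_app, List.map_map]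
    refine congrArg _ (List.map_congr_left fun a ha => ?_)
    have hsz : sizeOf a < sizeOf (Trm.app c ts) := by
      have := List.sizeOf_lt_of_mem ha; simp only [Trm.app.sizeOf_spec]; omega
    exact subst_subst θ θ' a
termination_by sizeOf t

theorem ext_refl (R : CS → CS → D) (hR : ∀ c, R c c = ⊤) (t : Trm V CS) :
    Trm.ext R t t = ⊤ := by
  match t with
  | .var X => simp [Trm.ext]
  | .app c ts =>
    rw [ext_app, if_pos rfl, hR, zip_self, List.map_map, top_inf_eq]
    refine foldr_inf_top _ _ fun a ha => ?_
    have hsz : sizeOf a < sizeOf (Trm.app c ts) := by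
      have := List.sizeOf_lt_of_mem ha; simp only [Trm.app.sizeOf_spec]; omega
    exact ext_refl R hR a
termination_by sizeOf t

theorem ext_subst_le (R : CS → CS → D) (hR : ∀ c, R c c = ⊤) (σ : V → Trm V CS)
    (t s : Trm V CS) : Trm.ext R t s ≤ Trm.ext R (t.subst σ) (s.subst σ) := by
  match t, s with
  | .var X, .var Y =>
    by_cases h : X = Y
    · subst h; simp [Trm.ext, Trm.subst, ext_refl R hR]
    · simp [Trm.ext, h]
  | .var X, .app c ss => simp [Trm.ext]
  | .app c ts, .var Y => simp [Trm.ext]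
  | .app c ts, .app c' ss =>
    by_cases h : ts.length = ss.length
    · rw [subst_app, subst_app, ext_app, ext_app, if_pos h, if_pos (by simp [h]),
        List.zip_map, List.map_map]
      refine inf_le_inf le_rfl ?_
      refine foldr_inf_mono _ _ _ fun p hp => ?_
      have hsz : sizeOf p.1 < sizeOf ts := List.sizeOf_lt_of_mem (List.of_mem_zip hp).1
      exact ext_subst_le R hR σ p.1 p.2
    · rw [ext_app, if_neg h]; exact bot_le
termination_by sizeOf t

variable {pI : PP → List (Trm Empty CS) → Prop}

theorem termClose_subst (R : CS → CS → D) (hR : ∀ c, R c c = ⊤)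
    {d : D} {Pi Pi' : Set (Constr V CS PP)} {θ : V → Trm V CS} {t s : Trm V CS}
    (h : TermClose R pI d Pi t s) (hE : EntailsSubst pI Pi' θ Pi) :
    TermClose R pI d Pi' (t.subst θ) (s.subst θ) := by
  obtain ⟨th, sh, h1, h2, h3⟩ := h
  refine ⟨th.subst θ, sh.subst θ, ?_, ?_, h3.trans (ext_subst_le R hR θ th sh)⟩
  · intro η hη
    have h' := h1 _ (hE η hη)
    simp only [Constr.sat] at h' ⊢
    rw [subst_applyVal, subst_applyVal]; exact h'
  · intro η hη
    have h' := h2 _ (hE η hη)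
    simp only [Constr.sat] at h' ⊢
    rw [subst_applyVal, subst_applyVal]; exact h'

theorem entails_prim_subst {Pi Pi' : Set (Constr V CS PP)} {θ : V → Trm V CS}
    {p : PP} {ts : List (Trm V CS)}
    (h : Entails pI Pi (Constr.prim p ts)) (hE : EntailsSubst pI Pi' θ Pi) :
    Entails pI Pi' (Constr.prim p (ts.map (Trm.subst θ))) := by
  intro η hη
  have h' := h _ (hE η hη)
  simp only [Constr.sat, List.map_map] at h' ⊢
  have : ts.map (Trm.applyVal η ∘ Trm.subst θ)
      = ts.map (Trm.applyVal fun X => (θ X).applyVal η) :=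
    List.map_congr_left fun a _ => subst_applyVal θ η a
  rw [this]; exact h'

theorem atom_subst_subst (θ θ' : V → Trm V CS) (A : Atom V CS DP PP) :
    (A.subst θ).subst θ' = A.subst (fun X => (θ X).subst θ') := by
  cases A <;> simp [Atom.subst, List.map_map, Function.comp_def, subst_subst]

theorem valid_mono (R : CS → CS → D) {I J : Set (QCAtom V CS DP PP D)} (hIJ : I ⊆ J)
    {A : Atom V CS DP PP} {d : D} {Pi : Set (Constr V CS PP)}
    (h : Valid R pI I ⟨A, d, Pi⟩) : Valid R pI J ⟨A, d, Pi⟩ := by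
  cases A with
  | defd r ts => exact hIJ h
  | prim p ts => exact h
  | eq t s => exact h

lemma inf_comp_cast {n m : ℕ} (h : m = n) (f : Fin n → D) :
    (Finset.univ.inf (f ∘ Fin.cast h)) = Finset.univ.inf f := by
  subst h; simp [Fin.cast_refl]

variable {arC : CS → ℕ} {arD : DP → ℕ}

theorem immCons_entails (Q : QualificationDomain D) (Rl : ProximityRel D arC arD)
    {I : Set (QCAtom V CS DP PP D)} (hI : IsInterp pI I) {C : Clause V CS DP PP D}
    {φ φ' : QCAtom V CS DP PP D}
    (h : ImmCons Q Rl pI I C φ) (hent : QCEntails pI φ φ') (hobs : Observable pI φ') :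
    ImmCons Q Rl pI I C φ' := by
  obtain ⟨p', ts', hatom, hφobs, θ, hn, ds, es, hd0, hds, hes, hclose, hvalid, hthr, hdeg⟩ := h
  obtain ⟨θ', hatom', hdeg', hE⟩ := hent
  have hlen : (ts'.map (Trm.subst θ')).length = ts'.length := List.length_map _
  refine ⟨p', ts'.map (Trm.subst θ'), ?_, hobs, fun X => (θ X).subst θ',
    by simpa using hn, ds ∘ Fin.cast hlen, es, hd0, fun i => hds _, hes, ?_, ?_, hthr, ?_⟩
  · rw [hatom'] at *; rw [hatom]; rfl
  · intro i
    have hget : (ts'.map (Trm.subst θ')).get i = (ts'.get (Fin.cast hlen i)).subst θ' := by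
      simp [List.get_eq_getElem]
    rw [hget, ← subst_subst]
    exact termClose_subst Rl.dc Rl.dc_refl (hclose (Fin.cast hlen i)) hE
  · intro j
    rw [← atom_subst_subst]
    have hv := hvalid j
    rcases hB : ((C.body.get j).1.subst θ) with ⟨r, us⟩ | ⟨p, us⟩ | ⟨t, s⟩
    · rw [hB] at hv
      have hmem : (⟨Atom.defd r us, es j, φ.cons⟩ : QCAtom V CS DP PP D) ∈ I := hv
      exact hI.2 _ hmem _ ⟨θ', rfl, le_rfl, hE⟩ ⟨hes j, hobs.2⟩
    · rw [hB] at hv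
      exact entails_prim_subst hv hE
    · rw [hB] at hv
      exact termClose_subst Rl.dc Rl.dc_refl hv hE
  · refine hdeg'.trans (hdeg.trans ?_)
    rw [inf_comp_cast]

theorem immCons_mono (Q : QualificationDomain D) (Rl : ProximityRel D arC arD)
    {I J : Set (QCAtom V CS DP PP D)} (hIJ : I ⊆ J) {C : Clause V CS DP PP D}
    {φ : QCAtom V CS DP PP D} (h : ImmCons Q Rl pI I C φ) : ImmCons Q Rl pI J C φ := by
  obtain ⟨p', ts', hatom, hobs, θ, hn, ds, es, hd0, hds, hes, hclose, hvalid, hthr, hdeg⟩ := h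
  exact ⟨p', ts', hatom, hobs, θ, hn, ds, es, hd0, hds, hes, hclose,
    fun j => valid_mono Rl.dc hIJ (hvalid j), hthr, hdeg⟩

theorem Tp_mono (Q : QualificationDomain D) (Rl : ProximityRel D arC arD)
    (P : Set (Clause V CS DP PP D)) {I J : Set (QCAtom V CS DP PP D)} (hIJ : I ⊆ J) :
    Tp Q Rl pI P I ⊆ Tp Q Rl pI P J := by
  rintro φ ⟨C, hC, h⟩
  exact ⟨C, hC, immCons_mono Q Rl hIJ h⟩

theorem isInterp_Tp (Q : QualificationDomain D) (Rl : ProximityRel D arC arD)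
    (P : Set (Clause V CS DP PP D)) {I : Set (QCAtom V CS DP PP D)} (hI : IsInterp pI I) :
    IsInterp pI (Tp Q Rl pI P I) := by
  constructor
  · rintro φ ⟨C, hC, p', ts', hatom, hobs, -⟩
    exact ⟨by rw [hatom]; trivial, hobs⟩
  · rintro φ ⟨C, hC, h⟩ φ' hent hobs
    exact ⟨C, hC, immCons_entails Q Rl hI h hent hobs⟩

theorem isInterp_empty : IsInterp pI (∅ : Set (QCAtom V CS DP PP D)) :=
  ⟨fun φ h => absurd h (Set.notMem_empty φ), fun φ h => absurd h (Set.notMem_empty φ)⟩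

end SQCLPAux

open SQCLPAux in
/-- Fixpoint characterization of least program models: every program `P`
has a least model `M_P`, which is the least fixpoint of `T_P` and equals
`⋃_{k ∈ ℕ} T_P^k(∅)`. -/
theorem least_model_fixpoint_characterization
    (Q : QualificationDomain D) (Rl : ProximityRel D arC arD)
    (pI : PP → List (Trm Empty CS) → Prop)
    (P : Set (Clause V CS DP PP D)) (hP : ProgWF P) :
    ∃ M : Set (QCAtom V CS DP PP D),
      IsInterp pI M ∧ ModelsProg Q Rl pI M P ∧
      (∀ I, IsInterp pI I → ModelsProg Q Rl pI I P → M ⊆ I) ∧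
      Tp Q Rl pI P M = M ∧
      (∀ I, IsInterp pI I → Tp Q Rl pI P I = I → M ⊆ I) ∧
      M = ⋃ k : ℕ, (Tp Q Rl pI P)^[k] ∅ := by
  classical
  set T := Tp Q Rl pI P with hT
  set M := ⋃ k : ℕ, T^[k] ∅ with hM
  have hiter : ∀ k, IsInterp pI ((T : _ → _)^[k] ∅) := by
    intro k; induction k with
    | zero => exact isInterp_empty
    | succ k ih => rw [Function.iterate_succ_apply']; exact isInterp_Tp Q Rl P ih
  have hmono : ∀ k, T^[k] ∅ ⊆ T^[k+1] ∅ := by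
    intro k; induction k with
    | zero => intro φ h; exact absurd h (Set.notMem_empty φ)
    | succ k ih =>
      rw [Function.iterate_succ_apply', Function.iterate_succ_apply']
      exact Tp_mono Q Rl P ih
  have hle : ∀ {k l : ℕ}, k ≤ l → T^[k] ∅ ⊆ T^[l] ∅ := by
    intro k l hkl
    induction hkl with
    | refl => exact subset_rfl
    | step h ih => exact ih.trans (hmono _)
  have hMinterp : IsInterp pI M := by
    constructor
    · intro φ hφ
      rw [hM, Set.mem_iUnion] at hφ
      obtain ⟨k, hφ⟩ := hφ
      exact (hiter k).1 φ hφ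
    · intro φ hφ φ' hent hobs
      rw [hM, Set.mem_iUnion] at hφ ⊢
      obtain ⟨k, hφ⟩ := hφ
      exact ⟨k, (hiter k).2 φ hφ φ' hent hobs⟩
  have hsub1 : T M ⊆ M := by
    rintro φ ⟨C, hC, h⟩
    obtain ⟨p', ts', hatom, hobs, θ, hn, ds, es, hd0, hds, hes, hclose, hvalid, hthr, hdeg⟩ := h
    have hex : ∀ j : Fin C.body.length, ∃ k,
        Valid Rl.dc pI (T^[k] ∅) ⟨(C.body.get j).1.subst θ, es j, φ.cons⟩ := by
      intro j
      rcases hB : ((C.body.get j).1.subst θ) with ⟨r, us⟩ | ⟨p, us⟩ | ⟨t, s⟩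
      · have hv := hvalid j
        rw [hB] at hv
        have hmem : (⟨Atom.defd r us, es j, φ.cons⟩ : QCAtom V CS DP PP D) ∈ M := hv
        rw [hM, Set.mem_iUnion] at hmem
        obtain ⟨k, hk⟩ := hmem
        exact ⟨k, hk⟩
      · have hv := hvalid j
        rw [hB] at hv
        exact ⟨0, hv⟩
      · have hv := hvalid j
        rw [hB] at hv
        exact ⟨0, hv⟩
    choose ks hks using hex
    rw [hM, Set.mem_iUnion]
    refine ⟨Finset.univ.sup ks + 1, ?_⟩
    rw [Function.iterate_succ_apply']
    refine ⟨C, hC, p', ts', hatom, hobs, θ, hn, ds, es, hd0, hds, hes, hclose, ?_, hthr, hdeg⟩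
    intro j
    exact valid_mono Rl.dc (hle (Finset.le_sup (Finset.mem_univ j))) (hks j)
  have hsub2 : M ⊆ T M := by
    intro φ hφ
    rw [hM, Set.mem_iUnion] at hφ
    obtain ⟨k, hk⟩ := hφ
    cases k with
    | zero => exact absurd hk (Set.notMem_empty φ)
    | succ k =>
      rw [Function.iterate_succ_apply'] at hk
      exact Tp_mono Q Rl P (by rw [hM]; exact Set.subset_iUnion (fun k => T^[k] ∅) k) hk
  have hfix : T M = M := Set.Subset.antisymm hsub1 hsub2
  have hleast : ∀ I : Set (QCAtom V CS DP PP D), T I ⊆ I → M ⊆ I := by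
    intro I hI
    rw [hM]
    refine Set.iUnion_subset fun k => ?_
    induction k with
    | zero => intro φ h; exact absurd h (Set.notMem_empty φ)
    | succ k ih =>
      rw [Function.iterate_succ_apply']
      exact (Tp_mono Q Rl P ih).trans hI
  refine ⟨M, hMinterp, ?_, ?_, hfix, ?_, hM⟩
  · intro C hC φ h
    exact hsub1 ⟨C, hC, h⟩
  · rintro I hI hmodels
    exact hleast I (fun φ hφ => by obtain ⟨C, hC, h⟩ := hφ; exact hmodels C hC φ h)
  · intro I _ hfixI
    exact hleast I (le_of_eq hfixI)


end Theorems
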